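/- For 0 < k/T ≤ ε with ε ∈ (0,1/2) small enough and T large, one has cos(πk/T)/cos(π/T) ≤ exp(−2π²(k²−1)/(5T²)). -/

import Mathlib

open Real

set_option maxHeartbeats 1600000 in
/-- Pointwise bound for the gambler's ruin series: for `ε ∈ (0,1/2)` small enough,
`T` large and `2 ≤ k` with `k/T ≤ ε`,
`cos(πk/T)/cos(π/T) ≤ exp(−2π²(k²−1)/(5T²))`. -/
theorem stmt9 : ∃ ε : ℝ, 0 < ε ∧ ε < 1 / 2 ∧ ∃ T₀ : ℕ, ∀ T : ℕ, T₀ ≤ T →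
    ∀ k : ℕ, 2 ≤ k → (k : ℝ) / (T : ℝ) ≤ ε →
    Real.cos (π * k / T) / Real.cos (π / T)
      ≤ Real.exp (-2 * π ^ 2 * ((k : ℝ) ^ 2 - 1) / (5 * (T : ℝ) ^ 2)) := by
  refine ⟨1/10, by norm_num, by norm_num, 1, ?_⟩
  intro T hT k hk hkT
  have ht : (1 : ℝ) ≤ (T : ℝ) := by exact_mod_cast hT
  have ht0 : (0 : ℝ) < (T : ℝ) := by linarith
  have hk2 : (2 : ℝ) ≤ (k : ℝ) := by exact_mod_cast hk
  set u : ℝ := (k : ℝ) / T with hu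
  set v : ℝ := 1 / T with hv
  have hu0 : 0 ≤ u := by positivity
  have hv0 : 0 < v := by positivity
  have huv : 2 * v ≤ u := by
    rw [hu, hv, mul_one_div]
    gcongr
  have hu01 : u ≤ 1/10 := hkT
  have hv20 : v ≤ 1/20 := by linarith
  have hpi1 : π < 3.15 := by linarith [Real.pi_lt_d2]
  have hpi0 : 3.14 < π := by linarith [Real.pi_gt_d2]
  have hx_eq : π * k / T = π * u := by rw [hu]; ring
  have hy_eq : π / T = π * v := by rw [hv]; ring
  rw [hx_eq, hy_eq]
  have hc_eq' : 2 * π ^ 2 * ((k : ℝ) ^ 2 - 1) / (5 * (T : ℝ) ^ 2)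
      = 2 * π ^ 2 * (u^2 - v^2) / 5 := by
    rw [hu, hv, div_pow, div_pow, one_pow, div_sub_div_same]
    field_simp
  clear_value u v
  have hxabs : |π * u| ≤ 1 := by
    rw [abs_of_nonneg (mul_nonneg Real.pi_pos.le hu0)]
    have := mul_le_mul hpi1.le hu01 hu0 (by norm_num : (0:ℝ) ≤ 3.15)
    linarith
  have hyabs : |π * v| ≤ 1 := by
    rw [abs_of_nonneg (mul_nonneg Real.pi_pos.le hv0.le)]
    have := mul_le_mul hpi1.le hv20 hv0.le (by norm_num : (0:ℝ) ≤ 3.15)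
    linarith
  have hbx := Real.cos_bound hxabs
  have hby := Real.cos_bound hyabs
  rw [abs_of_nonneg (mul_nonneg Real.pi_pos.le hu0)] at hbx
  rw [abs_of_nonneg (mul_nonneg Real.pi_pos.le hv0.le)] at hby
  have hbx' : Real.cos (π * u) ≤ 1 - (π*u)^2/2 + (π*u)^4 * (5/96) := by
    have := abs_le.1 hbx; linarith [this.2]
  have hby' : 1 - (π*v)^2/2 - (π*v)^4 * (5/96) ≤ Real.cos (π * v) := by
    have := abs_le.1 hby; linarith [this.1]
  have hw0 : (0:ℝ) < π * v := mul_pos Real.pi_pos hv0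
  have hw5 : π * v ≤ 1/5 := by
    have := mul_le_mul hpi1.le hv20 hv0.le (by norm_num : (0:ℝ) ≤ 3.15)
    linarith
  have hcosv_pos : 0 < Real.cos (π * v) := by
    have hw2 : (π*v)^2 ≤ (1/5)^2 := pow_le_pow_left₀ hw0.le hw5 2
    have hw4 : (π*v)^4 ≤ (1/5)^4 := pow_le_pow_left₀ hw0.le hw5 4
    linarith [hby', hw2, hw4]
  set c : ℝ := 2 * π ^ 2 * ((k : ℝ) ^ 2 - 1) / (5 * (T : ℝ) ^ 2) with hc
  have hc_eq : c = 2 * π ^ 2 * (u^2 - v^2) / 5 := hc_eq'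
  clear_value c
  have hq1 : π^2 < 10 := by
    have := mul_lt_mul'' hpi1 hpi1 Real.pi_pos.le Real.pi_pos.le
    nlinarith [this]
  have hs : v^2 ≤ u^2/4 := by
    have := mul_le_mul huv huv (by linarith) hu0
    linarith [this]
  have hs0 : 0 ≤ u^2 - v^2 := by linarith [hs, sq_nonneg v]
  have hu2 : u^2 ≤ 1/100 := by
    have := mul_le_mul hu01 hu01 hu0 (by norm_num : (0:ℝ) ≤ 1/10)
    linarith [this]
  have hv2 : v^2 ≤ 1/400 := by
    have := mul_le_mul hv20 hv20 hv0.le (by norm_num : (0:ℝ) ≤ 1/20)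
    linarith [this]
  have hu4 : u^4 ≤ u^2/100 := by
    have := mul_le_mul_of_nonneg_left hu2 (sq_nonneg u)
    linarith [this]
  have hv4 : v^4 ≤ v^2/400 := by
    have := mul_le_mul_of_nonneg_left hv2 (sq_nonneg v)
    linarith [this]
  have hqu : π^2 * u^4 ≤ u^2/10 := by
    have h10 : π^2 * u^4 ≤ 10 * u^4 :=
      mul_le_mul_of_nonneg_right hq1.le (by positivity)
    linarith
  have hqv : π^2 * v^4 ≤ v^2/40 := by
    have h10 : π^2 * v^4 ≤ 10 * v^4 :=
      mul_le_mul_of_nonneg_right hq1.le (by positivity)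
    linarith
  have hinner : 5 * π^2 * (u^4 + v^4) / 96 ≤ (u^2 - v^2)/10 := by
    linarith [hqu, hqv, hs, sq_nonneg u, sq_nonneg v]
  have hcore : 5 * π^4 * (u^4 + v^4) / 96 ≤ π^2 * (u^2 - v^2) / 10 := by
    have := mul_le_mul_of_nonneg_left hinner (sq_nonneg π)
    linarith [this]
  have hcross : 0 ≤ (2 * π^2 * (u^2 - v^2) / 5) * ((π*v)^2/2 + (π*v)^4 * (5/96)) := by
    positivity
  have h1 : 1 - (π*u)^2/2 + (π*u)^4 * (5/96) ≤
      (1 - (π*v)^2/2 - (π*v)^4 * (5/96)) * (1 - c) := by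
    rw [hc_eq]
    linarith [hcore, hcross]
  have hc0 : 0 ≤ c := by
    rw [hc_eq]
    have := mul_nonneg (sq_nonneg π) hs0
    linarith
  have hcsmall : c ≤ 1/2 := by
    rw [hc_eq]
    have h1 : u^2 - v^2 ≤ 1/100 := by linarith [hu2, sq_nonneg v]
    have h2 : π^2 * (u^2 - v^2) ≤ 10 * (1/100) :=
      mul_le_mul hq1.le h1 hs0 (by norm_num)
    linarith
  have h2 : (1 - (π*v)^2/2 - (π*v)^4 * (5/96)) * (1 - c) ≤ Real.cos (π*v) * (1 - c) :=
    mul_le_mul_of_nonneg_right hby' (by linarith)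
  have key : Real.cos (π * u) ≤ Real.cos (π * v) * (1 - c) := by linarith
  have hdiv : Real.cos (π * u) / Real.cos (π * v) ≤ 1 - c := by
    rw [div_le_iff₀ hcosv_pos]; linarith
  have hexp : 1 - c ≤ Real.exp (-c) := by
    linarith [Real.add_one_le_exp (-c)]
  have hrw : -2 * π ^ 2 * ((k : ℝ) ^ 2 - 1) / (5 * (T : ℝ) ^ 2) = -c := by
    rw [hc]; ring
  rw [hrw]
  linarith
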